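/- Let k ≥ 2, m = 2k+1 (so m ≥ 5 candidates, labeled a, b_1, …, b_k, c_1, …, c_k), and let λ be an integer with 1 ≤ λ ≤ m. The voters consist of, for each ℓ ∈ {1,…,k}, a set B_ℓ of λm voters and a set C_ℓ of m² voters (n = kλm + km² voters in total). Let σ be an ordinal profile in which every voter in B_ℓ ranks b_ℓ first, a second, then all candidates c_1,…,c_k, then the remaining b-candidates; and every voter in C_ℓ ranks c_ℓ first, a second, then all candidates b_1,…,b_k, then the remaining c-candidates. Let v̂ be the unit-sum valuation profile consistent with σ in which every voter in B_ℓ has value 1/2 for each of b_ℓ and a and 0 for all others, and every voter in C_ℓ has value 1/(k+2) for each of c_ℓ, a, b_1, …, b_k and 0 for all others. Then for every candidate w: (a) if w = a, there exists a unit-sum valuation profile v consistent with σ with SW(a|v) = 0 and SW(b_1|v) > 0; (b) if w = b_ℓ for some ℓ, there exists a unit-sum valuation profile v consistent with σ with SW(b_ℓ|v) ≤ λ and SW(a|v) ≥ m³/8, so that SW(a|v) ≥ (m³/(8λ))·SW(b_ℓ|v); (c) if w = c_ℓ for some ℓ, then under the true profile v = v̂ (accurate prediction), SW(a|v̂) ≥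 (λm/32)·SW(c_ℓ|v̂). (This shows that any mechanism with consistency o(λm) has robustness Ω(m³/λ).) -/

import Mathlib

open Finset

/-- Social welfare of candidate `x` under valuation profile `v`. -/
noncomputable def SW {V C : Type*} [Fintype V] (v : V → C → ℝ) (x : C) : ℝ := ∑ i, v i x

/-- `v` is a valuation profile with nonnegative values summing to `1` for each voter. -/
def UnitSum {V C : Type*} [Fintype C] (v : V → C → ℝ) : Prop :=
  (∀ i x, 0 ≤ v i x) ∧ ∀ i, ∑ x, v i x = 1

/-- `σ i p` is the candidate ranked at position `p` by voter `i` (position `0` is the top);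
`v` is consistent with `σ` if each voter's values are non-increasing along her ranking. -/
def Consistent {V C : Type*} {m : ℕ} (σ : V → (Fin m ≃ C)) (v : V → C → ℝ) : Prop :=
  ∀ i, ∀ p q : Fin m, p ≤ q → v i (σ i q) ≤ v i (σ i p)

lemma sum_two_ind {α : Type*} [Fintype α] [DecidableEq α] {A B : α} (h : A ≠ B) :
    ∑ x, (if x = A then (1:ℝ)/2 else if x = B then 1/2 else 0) = 1 := by
  have hpt : ∀ x, (if x = A then (1:ℝ)/2 else if x = B then 1/2 else 0)
      = (if x = A then (1:ℝ)/2 else 0) + (if x = B then 1/2 else 0) := by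
    intro x; by_cases h1 : x = A <;> by_cases h2 : x = B <;> simp_all
  simp only [hpt, Finset.sum_add_distrib, Finset.sum_ite_eq', Finset.mem_univ, if_true]
  norm_num

lemma top2_mono {C : Type*} [DecidableEq C] {m : ℕ} (e : Fin m ≃ C) (p0 p1 : Fin m)
    (h0 : (p0:ℕ) = 0) (h1 : (p1:ℕ) = 1) (p q : Fin m) (hpq : p ≤ q) :
    (if e q = e p0 then (1:ℝ)/2 else if e q = e p1 then 1/2 else 0) ≤
    (if e p = e p0 then 1/2 else if e p = e p1 then 1/2 else 0) := by
  have hpq' : (p:ℕ) ≤ (q:ℕ) := hpq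
  simp only [EmbeddingLike.apply_eq_iff_eq, Fin.ext_iff, h0, h1]
  split_ifs <;> (try norm_num) <;> (exfalso; omega)

lemma top1_mono {C : Type*} [DecidableEq C] {m : ℕ} (e : Fin m ≃ C) (p0 : Fin m)
    (h0 : (p0:ℕ) = 0) (p q : Fin m) (hpq : p ≤ q) :
    (if e q = e p0 then (1:ℝ) else 0) ≤ (if e p = e p0 then 1 else 0) := by
  have hpq' : (p:ℕ) ≤ (q:ℕ) := hpq
  simp only [EmbeddingLike.apply_eq_iff_eq, Fin.ext_iff, h0]
  split_ifs <;> (try norm_num) <;> (exfalso; omega)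

/-- The lower-bound instance showing that any voting mechanism with consistency `o(λm)` has
robustness `Ω(m³/λ)`, where `m = 2k+1`. Voters: for each `ℓ`, a set `B_ℓ` of `λm` voters
(`Sum.inl (ℓ, ·)`) and a set `C_ℓ` of `m²` voters (`Sum.inr (ℓ, ·)`). Candidates:
`a = Sum.inl ()`, `b ℓ = Sum.inr (Sum.inl ℓ)`, `c ℓ = Sum.inr (Sum.inr ℓ)`. -/
theorem stmt8 (k lam : ℕ) (hk : 2 ≤ k) (hlam1 : 1 ≤ lam) (hlam2 : lam ≤ 2 * k + 1)
    (σ : ((Fin k × Fin (lam * (2 * k + 1))) ⊕ (Fin k × Fin ((2 * k + 1) ^ 2))) →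
      (Fin (2 * k + 1) ≃ (Unit ⊕ Fin k ⊕ Fin k)))
    (hσB : ∀ (ℓ : Fin k) (t : Fin (lam * (2 * k + 1))),
      σ (Sum.inl (ℓ, t)) ⟨0, by omega⟩ = Sum.inr (Sum.inl ℓ) ∧
      σ (Sum.inl (ℓ, t)) ⟨1, by omega⟩ = Sum.inl () ∧
      ∀ p : Fin (2 * k + 1), 2 ≤ (p : ℕ) → (p : ℕ) ≤ k + 1 →
        ∃ j : Fin k, σ (Sum.inl (ℓ, t)) p = Sum.inr (Sum.inr j))
    (hσC : ∀ (ℓ : Fin k) (t : Fin ((2 * k + 1) ^ 2)),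
      σ (Sum.inr (ℓ, t)) ⟨0, by omega⟩ = Sum.inr (Sum.inr ℓ) ∧
      σ (Sum.inr (ℓ, t)) ⟨1, by omega⟩ = Sum.inl () ∧
      ∀ p : Fin (2 * k + 1), 2 ≤ (p : ℕ) → (p : ℕ) ≤ k + 1 →
        ∃ j : Fin k, σ (Sum.inr (ℓ, t)) p = Sum.inr (Sum.inl j))
    (vhat : ((Fin k × Fin (lam * (2 * k + 1))) ⊕ (Fin k × Fin ((2 * k + 1) ^ 2))) →
      (Unit ⊕ Fin k ⊕ Fin k) → ℝ)
    (hvhatU : UnitSum vhat) (hvhatC : Consistent σ vhat)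
    (hvhatB : ∀ (ℓ : Fin k) (t : Fin (lam * (2 * k + 1))),
      vhat (Sum.inl (ℓ, t)) (Sum.inr (Sum.inl ℓ)) = 1 / 2 ∧
      vhat (Sum.inl (ℓ, t)) (Sum.inl ()) = 1 / 2 ∧
      ∀ x, x ≠ Sum.inr (Sum.inl ℓ) → x ≠ Sum.inl () → vhat (Sum.inl (ℓ, t)) x = 0)
    (hvhatC' : ∀ (ℓ : Fin k) (t : Fin ((2 * k + 1) ^ 2)),
      vhat (Sum.inr (ℓ, t)) (Sum.inr (Sum.inr ℓ)) = 1 / ((k : ℝ) + 2) ∧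
      vhat (Sum.inr (ℓ, t)) (Sum.inl ()) = 1 / ((k : ℝ) + 2) ∧
      (∀ j : Fin k, vhat (Sum.inr (ℓ, t)) (Sum.inr (Sum.inl j)) = 1 / ((k : ℝ) + 2)) ∧
      ∀ j : Fin k, j ≠ ℓ → vhat (Sum.inr (ℓ, t)) (Sum.inr (Sum.inr j)) = 0) :
    ∀ w : Unit ⊕ Fin k ⊕ Fin k,
      (w = Sum.inl () →
        ∃ v, UnitSum v ∧ Consistent σ v ∧
          SW v (Sum.inl ()) = 0 ∧ 0 < SW v (Sum.inr (Sum.inl (⟨0, by omega⟩ : Fin k)))) ∧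
      (∀ ℓ : Fin k, w = Sum.inr (Sum.inl ℓ) →
        ∃ v, UnitSum v ∧ Consistent σ v ∧
          SW v (Sum.inr (Sum.inl ℓ)) ≤ (lam : ℝ) ∧
          (2 * (k : ℝ) + 1) ^ 3 / 8 ≤ SW v (Sum.inl ()) ∧
          ((2 * (k : ℝ) + 1) ^ 3 / (8 * lam)) * SW v (Sum.inr (Sum.inl ℓ)) ≤
            SW v (Sum.inl ())) ∧
      (∀ ℓ : Fin k, w = Sum.inr (Sum.inr ℓ) →
        ((lam : ℝ) * (2 * (k : ℝ) + 1) / 32) * SW vhat (Sum.inr (Sum.inr ℓ)) ≤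
          SW vhat (Sum.inl ())) := by
  classical
  have hB0 : ∀ (ℓ : Fin k) (t : Fin (lam * (2 * k + 1))),
      σ (Sum.inl (ℓ, t)) ⟨0, by omega⟩ = Sum.inr (Sum.inl ℓ) := fun ℓ t => (hσB ℓ t).1
  have hB1 : ∀ (ℓ : Fin k) (t : Fin (lam * (2 * k + 1))),
      σ (Sum.inl (ℓ, t)) ⟨1, by omega⟩ = Sum.inl () := fun ℓ t => (hσB ℓ t).2.1
  have hC0 : ∀ (ℓ : Fin k) (t : Fin ((2 * k + 1) ^ 2)),
      σ (Sum.inr (ℓ, t)) ⟨0, by omega⟩ = Sum.inr (Sum.inr ℓ) := fun ℓ t => (hσC ℓ t).1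
  have hC1 : ∀ (ℓ : Fin k) (t : Fin ((2 * k + 1) ^ 2)),
      σ (Sum.inr (ℓ, t)) ⟨1, by omega⟩ = Sum.inl () := fun ℓ t => (hσC ℓ t).2.1
  simp only [Fin.mk_zero, Fin.mk_one] at hB0 hB1 hC0 hC1
  have hK : (2:ℝ) ≤ (k:ℝ) := by exact_mod_cast hk
  have hL : (1:ℝ) ≤ (lam:ℝ) := by exact_mod_cast hlam1
  have hM0 : (2*(k:ℝ)+1) ≠ 0 := by positivity
  have hne01 : ∀ i, σ i (⟨0, by omega⟩ : Fin (2*k+1)) ≠ σ i ⟨1, by omega⟩ := by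
    intro i h
    have := (σ i).injective h
    simp [Fin.ext_iff] at this
  intro w
  refine ⟨fun _ => ?_, fun ℓ _ => ?_, fun ℓ _ => ?_⟩
  · -- Part (a): plurality profile
    set v : ((Fin k × Fin (lam * (2 * k + 1))) ⊕ (Fin k × Fin ((2 * k + 1) ^ 2))) →
        (Unit ⊕ Fin k ⊕ Fin k) → ℝ :=
      fun i x => if x = σ i ⟨0, by omega⟩ then 1 else 0 with hv
    refine ⟨v, ⟨fun i x => ?_, fun i => ?_⟩, fun i p q hpq => ?_, ?_, ?_⟩
    · simp only [hv]; split_ifs <;> norm_num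
    · simp only [hv, Finset.sum_ite_eq', Finset.mem_univ, if_true]
    · simp only [hv]
      exact top1_mono (σ i) _ rfl p q hpq
    · refine Finset.sum_eq_zero ?_
      rintro (⟨l, t⟩ | ⟨l, t⟩) -
      · simp [hv, hB0 l t]
      · simp [hv, hC0 l t]
    · have hpos : 0 < lam * (2 * k + 1) := Nat.mul_pos (by omega) (by omega)
      refine Finset.sum_pos' (fun i _ => ?_) ⟨Sum.inl (⟨0, by omega⟩, ⟨0, hpos⟩),
        Finset.mem_univ _, ?_⟩
      · simp only [hv]; split_ifs <;> norm_num
      · simp [hv, hB0 ⟨0, by omega⟩ ⟨0, hpos⟩]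
  · -- Part (b)
    set v : ((Fin k × Fin (lam * (2 * k + 1))) ⊕ (Fin k × Fin ((2 * k + 1) ^ 2))) →
        (Unit ⊕ Fin k ⊕ Fin k) → ℝ :=
      fun i x => Sum.elim
        (fun p : Fin k × Fin (lam * (2 * k + 1)) =>
          if p.1 = ℓ then 1 / (2*(k:ℝ)+1)
          else if x = σ (Sum.inl p) ⟨0, by omega⟩ then 1/2
          else if x = σ (Sum.inl p) ⟨1, by omega⟩ then 1/2 else 0)
        (fun p : Fin k × Fin ((2 * k + 1) ^ 2) =>
          if x = σ (Sum.inr p) ⟨0, by omega⟩ then 1/2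
          else if x = σ (Sum.inr p) ⟨1, by omega⟩ then 1/2 else 0) i with hv
    have hnn : ∀ i x, 0 ≤ v i x := by
      rintro (⟨l, t⟩ | ⟨l, t⟩) x <;> simp only [hv, Sum.elim_inl, Sum.elim_inr] <;>
        split_ifs <;> positivity
    have hSWb : SW v (Sum.inr (Sum.inl ℓ)) = (lam : ℝ) := by
      unfold SW
      rw [Fintype.sum_sum_type]
      have h2 : ∑ p : Fin k × Fin ((2*k+1)^2), v (Sum.inr p) (Sum.inr (Sum.inl ℓ)) = 0 := by
        refine Finset.sum_eq_zero ?_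
        rintro ⟨l, t⟩ -
        simp [hv, hC0 l t, hC1 l t]
      rw [h2, add_zero, Fintype.sum_prod_type]
      have h1 : ∀ l : Fin k, ∑ t : Fin (lam*(2*k+1)), v (Sum.inl (l, t)) (Sum.inr (Sum.inl ℓ))
          = if l = ℓ then (lam : ℝ) else 0 := by
        intro l
        by_cases hl : l = ℓ
        · subst hl
          have hval : ∀ t : Fin (lam*(2*k+1)),
              v (Sum.inl (l, t)) (Sum.inr (Sum.inl l)) = 1/(2*(k:ℝ)+1) := by
            intro t; simp [hv]
          rw [if_pos rfl, Finset.sum_congr rfl fun t _ => hval t]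
          simp only [Finset.sum_const, Finset.card_univ, Fintype.card_fin, nsmul_eq_mul]
          push_cast
          field_simp
        · rw [if_neg hl]
          refine Finset.sum_eq_zero fun t _ => ?_
          simp [hv, hl, Ne.symm hl, hB0 l t, hB1 l t]
      rw [Finset.sum_congr rfl fun l _ => h1 l]
      simp
    have hterm : ∀ p : Fin k × Fin ((2*k+1)^2), v (Sum.inr p) (Sum.inl ()) = 1/2 := by
      rintro ⟨l, t⟩
      simp [hv, hC0 l t, hC1 l t]
    have hSWa : (2*(k:ℝ)+1)^3/8 ≤ SW v (Sum.inl ()) := by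
      unfold SW
      rw [Fintype.sum_sum_type]
      have hS1 : 0 ≤ ∑ p : Fin k × Fin (lam*(2*k+1)), v (Sum.inl p) (Sum.inl ()) :=
        Finset.sum_nonneg fun p _ => hnn _ _
      have hS2 : ∑ p : Fin k × Fin ((2*k+1)^2), v (Sum.inr p) (Sum.inl ())
          = ((k : ℝ) * (2*(k:ℝ)+1)^2) * (1/2) := by
        rw [Finset.sum_congr rfl fun p _ => hterm p]
        simp only [Finset.sum_const, Finset.card_univ, Fintype.card_prod, Fintype.card_fin,
          nsmul_eq_mul]
        push_cast
        ring
      have hkey : (2*(k:ℝ)+1)^3/8 ≤ ((k : ℝ) * (2*(k:ℝ)+1)^2) * (1/2) := by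
        nlinarith [sq_nonneg (2*(k:ℝ)+1)]
      linarith
    refine ⟨v, ⟨hnn, fun i => ?_⟩, fun i p q hpq => ?_, le_of_eq hSWb, hSWa, ?_⟩
    · rcases i with ⟨l, t⟩ | ⟨l, t⟩
      · by_cases hl : l = ℓ
        · simp only [hv, Sum.elim_inl, if_pos hl, Finset.sum_const, Finset.card_univ,
            nsmul_eq_mul]
          have : (Fintype.card (Unit ⊕ Fin k ⊕ Fin k) : ℝ) = 2*(k:ℝ)+1 := by
            simp; push_cast; ring
          rw [this]
          field_simp
        · simp only [hv, Sum.elim_inl, if_neg hl]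
          exact sum_two_ind (hne01 (Sum.inl (l, t)))
      · simp only [hv, Sum.elim_inr]
        exact sum_two_ind (hne01 (Sum.inr (l, t)))
    · rcases i with ⟨l, t⟩ | ⟨l, t⟩
      · by_cases hl : l = ℓ
        · simp only [hv, Sum.elim_inl, if_pos hl, le_refl]
        · simp only [hv, Sum.elim_inl, if_neg hl]
          exact top2_mono (σ (Sum.inl (l, t))) _ _ rfl rfl p q hpq
      · simp only [hv, Sum.elim_inr]
        exact top2_mono (σ (Sum.inr (l, t))) _ _ rfl rfl p q hpq
    · rw [hSWb]
      have hL0 : (lam:ℝ) ≠ 0 := by linarith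
      have : (2*(k:ℝ)+1)^3/(8*(lam:ℝ)) * (lam:ℝ) = (2*(k:ℝ)+1)^3/8 := by
        field_simp
      rw [this]
      exact hSWa
  · -- Part (c)
    have hc : SW vhat (Sum.inr (Sum.inr ℓ)) = (2*(k:ℝ)+1)^2 * (1/((k:ℝ)+2)) := by
      unfold SW
      rw [Fintype.sum_sum_type]
      have h1 : ∑ p : Fin k × Fin (lam*(2*k+1)), vhat (Sum.inl p) (Sum.inr (Sum.inr ℓ)) = 0 := by
        refine Finset.sum_eq_zero ?_
        rintro ⟨l, t⟩ -
        exact (hvhatB l t).2.2 _ (by simp) (by simp)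
      rw [h1, zero_add, Fintype.sum_prod_type]
      have h2 : ∀ l : Fin k, ∑ t : Fin ((2*k+1)^2), vhat (Sum.inr (l,t)) (Sum.inr (Sum.inr ℓ))
          = if l = ℓ then (2*(k:ℝ)+1)^2 * (1/((k:ℝ)+2)) else 0 := by
        intro l
        by_cases hl : l = ℓ
        · subst hl
          rw [if_pos rfl, Finset.sum_congr rfl fun t _ => (hvhatC' l t).1]
          simp only [Finset.sum_const, Finset.card_univ, Fintype.card_fin, nsmul_eq_mul]
          push_cast
          ring
        · rw [if_neg hl]
          exact Finset.sum_eq_zero fun t _ => (hvhatC' l t).2.2.2 ℓ (fun h => hl h.symm)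
      rw [Finset.sum_congr rfl fun l _ => h2 l]
      simp
    have ha : (k:ℝ) * ((lam:ℝ) * (2*(k:ℝ)+1)) * (1/2) ≤ SW vhat (Sum.inl ()) := by
      unfold SW
      rw [Fintype.sum_sum_type]
      have h1' : ∀ p : Fin k × Fin (lam*(2*k+1)), vhat (Sum.inl p) (Sum.inl ()) = 1/2 :=
        fun p => (hvhatB p.1 p.2).2.1
      have h1 : ∑ p : Fin k × Fin (lam*(2*k+1)), vhat (Sum.inl p) (Sum.inl ())
          = (k:ℝ) * ((lam:ℝ) * (2*(k:ℝ)+1)) * (1/2) := by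
        rw [Finset.sum_congr rfl fun p _ => h1' p]
        simp only [Finset.sum_const, Finset.card_univ, Fintype.card_prod, Fintype.card_fin,
          nsmul_eq_mul]
        push_cast
        ring
      have h2 : 0 ≤ ∑ p : Fin k × Fin ((2*k+1)^2), vhat (Sum.inr p) (Sum.inl ()) :=
        Finset.sum_nonneg fun p _ => hvhatU.1 _ _
      linarith
    rw [hc]
    have hK2 : (0:ℝ) < (k:ℝ) + 2 := by positivity
    have key : (2*(k:ℝ)+1)^2 ≤ 16*(k:ℝ)*((k:ℝ)+2) := by nlinarith
    have hineq : ((lam:ℝ) * (2*(k:ℝ)+1)/32) * ((2*(k:ℝ)+1)^2 * (1/((k:ℝ)+2)))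
        ≤ (k:ℝ) * ((lam:ℝ) * (2*(k:ℝ)+1)) * (1/2) := by
      have expand : ((lam:ℝ) * (2*(k:ℝ)+1)/32) * ((2*(k:ℝ)+1)^2 * (1/((k:ℝ)+2)))
          = ((lam:ℝ) * (2*(k:ℝ)+1) * (2*(k:ℝ)+1)^2) / (32*((k:ℝ)+2)) := by
        field_simp
      rw [expand, div_le_iff₀ (by positivity)]
      have hLM : (0:ℝ) ≤ (lam:ℝ) * (2*(k:ℝ)+1) := by positivity
      nlinarith [mul_le_mul_of_nonneg_left key hLM]
    linarith
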